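/- (Mask stabilization.) During the iteration of a fixed set of n delta models, the masks and unified signs are constant from the first iteration onward: for every i ∈ {1,…,n}, every coordinate k, and every j ≥ 1, M^i_k(j) = M^i_k(1) and γ_k(j) = γ_k(1). -/
import Mathlib

open Filter

private lemma sign_smul_pos' {c x : ℝ} (hc : 0 < c) : Real.sign (c * x) = Real.sign x := by
  rcases lt_trichotomy x 0 with h | h | h
  · rw [Real.sign_of_neg h, Real.sign_of_neg (mul_neg_of_pos_of_neg hc h)]
  · simp [h]
  · rw [Real.sign_of_pos h, Real.sign_of_pos (mul_pos hc h)]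

private lemma mul_pos_of_sign_eq' {x y : ℝ} (hx : x ≠ 0) (hy : y ≠ 0)
    (h : Real.sign x = Real.sign y) : 0 < x * y := by
  rcases lt_trichotomy x 0 with h1 | h1 | h1
  · rcases lt_trichotomy y 0 with h2 | h2 | h2
    · exact mul_pos_of_neg_of_neg h1 h2
    · exact absurd h2 hy
    · rw [Real.sign_of_neg h1, Real.sign_of_pos h2] at h; norm_num at h
  · exact absurd h1 hx
  · rcases lt_trichotomy y 0 with h2 | h2 | h2
    · rw [Real.sign_of_pos h1, Real.sign_of_neg h2] at h; norm_num at h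
    · exact absurd h2 hy
    · exact mul_pos h1 h2

private lemma sign_sval_mul_pos' {s e : ℝ} (hs : s = -1 ∨ s = 0 ∨ s = 1) (he : 0 < e) :
    Real.sign (s * e) = s := by
  rcases hs with h | h | h <;> subst h
  · rw [neg_one_mul, Real.sign_neg, Real.sign_of_pos he]
  · rw [zero_mul, Real.sign_zero]
  · rw [one_mul, Real.sign_of_pos he]

theorem stmt11
    (n d : ℕ) (hn : 1 ≤ n) (hd : 1 ≤ d)
    (Δ : ℕ → Fin n → Fin d → ℝ)
    (γ ε U : ℕ → Fin d → ℝ)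
    (M : ℕ → Fin n → Fin d → ℝ)
    (lam : ℕ → Fin n → ℝ)
    (hγ : ∀ (j : ℕ) k, γ (j+1) k = Real.sign (∑ i, Δ j i k))
    (hε : ∀ (j : ℕ) k, γ (j+1) k ≠ 0 →
      (∃ i, Real.sign (Δ j i k) = γ (j+1) k ∧ |Δ j i k| = ε (j+1) k) ∧
      (∀ i, Real.sign (Δ j i k) = γ (j+1) k → |Δ j i k| ≤ ε (j+1) k))
    (hε0 : ∀ (j : ℕ) k, γ (j+1) k = 0 → ε (j+1) k = 0)
    (hU : ∀ (j : ℕ) k, U (j+1) k = γ (j+1) k * ε (j+1) k)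
    (hM : ∀ (j : ℕ) i k, M (j+1) i k = if 0 < Δ j i k * U (j+1) k then 1 else 0)
    (hden : ∀ (j : ℕ) i, ∑ k, |M (j+1) i k * U (j+1) k| ≠ 0)
    (hlam : ∀ (j : ℕ) i,
      lam (j+1) i = (∑ k, |Δ j i k|) / (∑ k, |M (j+1) i k * U (j+1) k|))
    (hstep : ∀ (j : ℕ) i k, Δ (j+1) i k = lam (j+1) i * (M (j+1) i k * U (j+1) k)) :
    ∀ (i : Fin n) (k : Fin d) (j : ℕ), 1 ≤ j →
      M j i k = M 1 i k ∧ γ j k = γ 1 k := by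
  have hU1 : ∀ k, U 1 k = γ 1 k * ε 1 k := hU 0
  have hγ1 : ∀ k, γ 1 k = Real.sign (∑ i, Δ 0 i k) := hγ 0
  have hM1 : ∀ i k, M 1 i k = if 0 < Δ 0 i k * U 1 k then 1 else 0 := hM 0
  -- λ (j+1) i is always positive
  have hlampos : ∀ (j : ℕ) (i : Fin n), 0 < lam (j+1) i := by
    intro j i
    have h0 : (0:ℝ) ≤ ∑ k, |M (j+1) i k * U (j+1) k| :=
      Finset.sum_nonneg fun k _ => abs_nonneg _
    have hDpos : 0 < ∑ k, |M (j+1) i k * U (j+1) k| :=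
      h0.lt_of_ne (Ne.symm (hden j i))
    have h1 : (0:ℝ) ≤ ∑ k, |Δ j i k| := Finset.sum_nonneg fun k _ => abs_nonneg _
    have hNpos : 0 < ∑ k, |Δ j i k| := by
      rcases h1.lt_or_eq with h | h
      · exact h
      · exfalso
        have hz : ∀ k, Δ j i k = 0 := by
          intro k
          have := (Finset.sum_eq_zero_iff_of_nonneg (fun k _ => abs_nonneg (Δ j i k))).1
            h.symm k (Finset.mem_univ k)
          exact abs_eq_zero.1 this
        apply hden j i
        apply Finset.sum_eq_zero
        intro k _
        rw [hM j i k, hz k]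
        simp
    rw [hlam j i]
    positivity
  -- M values are 0 or 1
  have hM01 : ∀ (j : ℕ) (i : Fin n) (k : Fin d), M (j+1) i k = 0 ∨ M (j+1) i k = 1 := by
    intro j i k; rw [hM j i k]; split <;> simp
  have hγval : ∀ k, γ 1 k = -1 ∨ γ 1 k = 0 ∨ γ 1 k = 1 := fun k =>
    (hγ1 k) ▸ Real.sign_apply_eq _
  -- sign of U 1
  have hsignU1 : ∀ k, Real.sign (U 1 k) = γ 1 k := by
    intro k
    by_cases h : γ 1 k = 0
    · rw [hU1 k, h, hε0 0 k h]; simp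
    · obtain ⟨⟨i, hi1, hi2⟩, _⟩ := hε 0 k h
      have hΔne : Δ 0 i k ≠ 0 := fun hz => h (by rw [← hi1, hz, Real.sign_zero])
      have hεpos : 0 < ε 1 k := hi2 ▸ abs_pos.2 hΔne
      rw [hU1 k]
      exact sign_sval_mul_pos' (hγval k) hεpos
  have hU1zero : ∀ k, γ 1 k = 0 → U 1 k = 0 := fun k h => by
    rw [hU1 k, h, zero_mul]
  have hM1zero : ∀ (i : Fin n) k, γ 1 k = 0 → M 1 i k = 0 := by
    intro i k h
    rw [hM1 i k, hU1zero k h]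
    simp
  -- when γ 1 k ≠ 0, some mask entry is 1
  have hexists : ∀ k, γ 1 k ≠ 0 → ∃ i, M 1 i k = 1 := by
    intro k h
    obtain ⟨⟨i, hi1, hi2⟩, _⟩ := hε 0 k h
    refine ⟨i, ?_⟩
    have hΔne : Δ 0 i k ≠ 0 := fun hz => h (by rw [← hi1, hz, Real.sign_zero])
    have hUne : U 1 k ≠ 0 := fun hz => h (by rw [← hsignU1 k, hz, Real.sign_zero])
    have : 0 < Δ 0 i k * U 1 k :=
      mul_pos_of_sign_eq' hΔne hUne (by rw [hi1, ← hsignU1 k])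
    rw [hM1 i k, if_pos this]
  -- main invariant
  have main : ∀ (j : ℕ), 1 ≤ j →
      (∀ k, γ j k = γ 1 k) ∧ (∀ k, Real.sign (U j k) = γ 1 k) ∧
      (∀ i k, M j i k = M 1 i k) ∧
      (∀ i k, Δ j i k = lam j i * (M 1 i k * U j k)) ∧ (∀ i, 0 < lam j i) := by
    intro j hj
    induction j, hj using Nat.le_induction with
    | base =>
      exact ⟨fun k => rfl, hsignU1, fun i k => rfl,
        fun i k => hstep 0 i k, fun i => hlampos 0 i⟩
    | succ m hm ih =>
      obtain ⟨ihγ, ihU, ihM, ihΔ, ihlam⟩ := ih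
      obtain ⟨m, rfl⟩ : ∃ m', m = m' + 1 := ⟨m - 1, (Nat.succ_pred_eq_of_pos hm).symm⟩
      -- γ at the next step
      have hγnew : ∀ k, γ (m+1+1) k = γ 1 k := by
        intro k
        by_cases h : γ 1 k = 0
        · have hUz : U (m+1) k = 0 := by
            have := ihU k; rw [h] at this; exact Real.sign_eq_zero_iff.1 this
          rw [hγ (m+1) k, h]
          have hz : ∀ i, Δ (m+1) i k = 0 := fun i => by rw [ihΔ i k, hUz]; ring
          simp [hz]
        · have hUne : U (m+1) k ≠ 0 := fun hz => h (by rw [← ihU k, hz, Real.sign_zero])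
          have hsum : ∑ i, Δ (m+1) i k = (∑ i, lam (m+1) i * M 1 i k) * U (m+1) k := by
            rw [Finset.sum_mul]
            exact Finset.sum_congr rfl fun i _ => by rw [ihΔ i k]; ring
          obtain ⟨i0, hi0⟩ := hexists k h
          have hcpos : 0 < ∑ i, lam (m+1) i * M 1 i k := by
            refine Finset.sum_pos' (fun i _ => ?_) ⟨i0, Finset.mem_univ i0, ?_⟩
            · rcases hM01 0 i k with h1 | h1
              · rw [h1, mul_zero]
              · rw [h1, mul_one]; exact (ihlam i).le
            · rw [hi0, mul_one]; exact ihlam i0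
          rw [hγ (m+1) k, hsum, sign_smul_pos' hcpos, ihU k]
      -- sign of U at the next step
      have hUnew : ∀ k, Real.sign (U (m+1+1) k) = γ 1 k := by
        intro k
        by_cases h : γ 1 k = 0
        · rw [hU (m+1) k, hγnew k, h, hε0 (m+1) k (by rw [hγnew k, h]), mul_zero,
            Real.sign_zero]
        · have hne : γ (m+1+1) k ≠ 0 := by rw [hγnew k]; exact h
          obtain ⟨⟨i, hi1, hi2⟩, _⟩ := hε (m+1) k hne
          have hΔne : Δ (m+1) i k ≠ 0 := fun hz => hne (by rw [← hi1, hz, Real.sign_zero])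
          have hεpos : 0 < ε (m+1+1) k := hi2 ▸ abs_pos.2 hΔne
          rw [hU (m+1) k, hγnew k]
          exact sign_sval_mul_pos' (hγval k) hεpos
      -- masks at the next step
      have hMnew : ∀ (i : Fin n) k, M (m+1+1) i k = M 1 i k := by
        intro i k
        by_cases h : γ 1 k = 0
        · have hUz : U (m+1) k = 0 := by
            have := ihU k; rw [h] at this; exact Real.sign_eq_zero_iff.1 this
          have hz : Δ (m+1) i k = 0 := by rw [ihΔ i k, hUz]; ring
          rw [hM (m+1) i k, hz, hM1zero i k h]
          simp
        · have hUne : U (m+1) k ≠ 0 := fun hz => h (by rw [← ihU k, hz, Real.sign_zero])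
          have hUne' : U (m+1+1) k ≠ 0 := fun hz => h (by rw [← hUnew k, hz, Real.sign_zero])
          rcases hM01 0 i k with h1 | h1
          · have hz : Δ (m+1) i k = 0 := by rw [ihΔ i k, h1]; ring
            rw [hM (m+1) i k, hz, h1]
            simp
          · have hΔ : Δ (m+1) i k = lam (m+1) i * U (m+1) k := by
              rw [ihΔ i k, h1, one_mul]
            have hpos : 0 < Δ (m+1) i k * U (m+1+1) k := by
              rw [hΔ, mul_assoc]
              exact mul_pos (ihlam i)
                (mul_pos_of_sign_eq' hUne hUne' (by rw [ihU k, hUnew k]))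
            rw [hM (m+1) i k, if_pos hpos, h1]
      exact ⟨hγnew, hUnew, hMnew, fun i k => by rw [hstep (m+1) i k, hMnew i k],
        fun i => hlampos (m+1) i⟩
  intro i k j hj
  obtain ⟨ihγ, _, ihM, _, _⟩ := main j hj
  exact ⟨ihM i k, ihγ k⟩
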